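/- Let H be a complex Hilbert space, U a unitary bounded operator on H, P the orthogonal projection of H onto ker(U + 1), and B a bounded linear operator on H satisfying B ∘ P = 0, (U + 1) ∘ B = id - P, and B ∘ (U + 1) = id - P. Then the partial Cayley transform A := i · ((U - 1) ∘ B) is a self-adjoint bounded operator on H, i.e. A⋆ = A. -/

import Mathlib

/-- Let `H` be a complex Hilbert space, `U` a unitary bounded operator on `H`, `P` the
orthogonal projection onto `ker (U + 1)`, and `B` a bounded operator with `B ∘ P = 0`,
`(U + 1) ∘ B = 1 - P` and `B ∘ (U + 1) = 1 - P`. Then the partial Cayley transform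
`A := i • ((U - 1) ∘ B)` is self-adjoint. -/
theorem partialCayleyTransform_isSelfAdjoint
    {H : Type*} [NormedAddCommGroup H] [InnerProductSpace ℂ H] [CompleteSpace H]
    (U P B : H →L[ℂ] H)
    (hU₁ : ContinuousLinearMap.adjoint U ∘L U = 1)
    (hU₂ : U ∘L ContinuousLinearMap.adjoint U = 1)
    (hP : ∀ x : H, P x ∈ LinearMap.ker ((U + 1 : H →L[ℂ] H) : H →ₗ[ℂ] H) ∧ x - P x ∈ (LinearMap.ker ((U + 1 : H →L[ℂ] H) : H →ₗ[ℂ] H))ᗮ)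
    (hB₀ : B ∘L P = 0) (hB₁ : (U + 1) ∘L B = 1 - P) (hB₂ : B ∘L (U + 1) = 1 - P) :
    ContinuousLinearMap.adjoint (Complex.I • ((U - 1) ∘L B)) =
      Complex.I • ((U - 1) ∘L B) := by
  set V := ContinuousLinearMap.adjoint U with hV
  set B' := ContinuousLinearMap.adjoint B with hB'
  have hPsymm : ∀ x y : H, (inner ℂ (P x) y : ℂ) = inner ℂ x (P y) := by
    intro x y
    have a : (inner ℂ (P x) (y - P y) : ℂ) = 0 :=
      (Submodule.mem_orthogonal _ _).mp (hP y).2 (P x) (hP x).1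
    have b : (inner ℂ (x - P x) (P y) : ℂ) = 0 := by
      have h : (inner ℂ (P y) (x - P x) : ℂ) = 0 :=
        (Submodule.mem_orthogonal _ _).mp (hP x).2 (P y) (hP y).1
      rw [← inner_conj_symm, h, map_zero]
    have a' : (inner ℂ (P x) y : ℂ) = inner ℂ (P x) (P y) := by
      rw [← sub_eq_zero, ← inner_sub_right]; exact a
    have b' : (inner ℂ x (P y) : ℂ) = inner ℂ (P x) (P y) := by
      rw [← sub_eq_zero, ← inner_sub_left]; exact b
    rw [a', b']
  have hPadj : ContinuousLinearMap.adjoint P = P :=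
    ((ContinuousLinearMap.eq_adjoint_iff P P).mpr hPsymm).symm
  have hfix : ∀ v : H, v ∈ LinearMap.ker ((U + 1 : H →L[ℂ] H) : H →ₗ[ℂ] H) → P v = v := by
    intro v hv
    have h1 : v - P v ∈ LinearMap.ker ((U + 1 : H →L[ℂ] H) : H →ₗ[ℂ] H) := sub_mem hv (hP v).1
    have h2 : (inner ℂ (v - P v) (v - P v) : ℂ) = 0 :=
      (Submodule.mem_orthogonal _ _).mp (hP v).2 _ h1
    have := inner_self_eq_zero.mp h2
    rw [sub_eq_zero] at this
    exact this.symm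
  -- rephrase with *
  have hUV : U * V = 1 := hU₂
  have hB₁' : (U + 1) * B = 1 - P := hB₁
  have hB₂' : B * (U + 1) = 1 - P := hB₂
  have hB₀' : B * P = 0 := hB₀
  have adjoint_mul : ∀ S T : H →L[ℂ] H,
      ContinuousLinearMap.adjoint (S * T)
        = ContinuousLinearMap.adjoint T * ContinuousLinearMap.adjoint S :=
    fun S T => ContinuousLinearMap.adjoint_comp S T
  have adjoint_one : ContinuousLinearMap.adjoint (1 : H →L[ℂ] H) = 1 :=
    ContinuousLinearMap.adjoint_id
  -- P is a projection onto the kernel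
  have hUP : (U + 1) * P = 0 := by
    ext x
    simpa using LinearMap.mem_ker.mp (hP x).1
  have hPP : P * P = P := by
    ext x
    exact hfix (P x) (hP x).1
  have hUPneg : U * P = -P := by
    have h : U * P + P = 0 := by
      have := hUP; rwa [add_mul, one_mul] at this
    exact eq_neg_of_add_eq_zero_left h
  -- adjoint identities
  have hB'1 : B' * (V + 1) = 1 - P := by
    have h := congrArg ContinuousLinearMap.adjoint hB₁'
    rw [adjoint_mul, map_add, adjoint_one, map_sub, adjoint_one, hPadj] at h
    exact h
  have hB'2 : (V + 1) * B' = 1 - P := by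
    have h := congrArg ContinuousLinearMap.adjoint hB₂'
    rw [adjoint_mul, map_add, adjoint_one, map_sub, adjoint_one, hPadj] at h
    exact h
  have hPB' : P * B' = 0 := by
    have h := congrArg ContinuousLinearMap.adjoint hB₀'
    rw [adjoint_mul, hPadj, map_zero] at h
    exact h
  have hUB' : (U + 1) * B' = U + P := by
    have e1 : U * (V + 1) = U + 1 := by rw [mul_add, mul_one, hUV]; exact add_comm 1 U
    rw [← e1, mul_assoc, hB'2, mul_sub, mul_one, hUPneg, sub_neg_eq_add]
  -- the symmetric defect D
  set D := B + B' - (1 - P) with hD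
  have hD1 : (U + 1) * D = 0 := by
    rw [hD, mul_sub, mul_add, hB₁', hUB', mul_sub, mul_one, hUP]
    abel
  have hPD : P * D = D := by
    ext x
    have hx : D x ∈ LinearMap.ker ((U + 1 : H →L[ℂ] H) : H →ₗ[ℂ] H) := by
      rw [LinearMap.mem_ker]
      have h := ContinuousLinearMap.ext_iff.mp hD1 x
      simpa [ContinuousLinearMap.mul_apply] using h
    simpa [ContinuousLinearMap.mul_apply] using hfix _ hx
  have hDadj : ContinuousLinearMap.adjoint D = D := by
    rw [hD, map_sub, map_add, ← hB', ContinuousLinearMap.adjoint_adjoint,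
      map_sub, adjoint_one, hPadj]
    abel
  have hDP : D * P = B' * P := by
    rw [hD, sub_mul, add_mul, hB₀', sub_mul, one_mul, hPP, sub_self, sub_zero, zero_add]
  have hD0 : D = 0 := by
    have hDeq : D = B' * P := by
      calc D = ContinuousLinearMap.adjoint D := hDadj.symm
        _ = ContinuousLinearMap.adjoint (P * D) := by rw [hPD]
        _ = ContinuousLinearMap.adjoint D * ContinuousLinearMap.adjoint P := adjoint_mul _ _
        _ = D * P := by rw [hDadj, hPadj]
        _ = B' * P := hDP
    calc D = P * D := hPD.symm
      _ = P * (B' * P) := by rw [← hDeq]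
      _ = (P * B') * P := (mul_assoc _ _ _).symm
      _ = 0 := by rw [hPB', zero_mul]
  have hsum : B + B' = 1 - P := by
    have := hD0
    rw [hD, sub_eq_zero] at this
    exact this
  -- final computation
  have h2 : (U - 1) * B = (1 - P) - B - B := by
    have e : (U - 1) * B = (U + 1) * B - B - B := by
      rw [sub_mul, add_mul, one_mul]; abel
    rw [e, hB₁']
  have h3 : B' * (V - 1) = (1 - P) - B' - B' := by
    have e : B' * (V - 1) = B' * (V + 1) - B' - B' := by
      rw [mul_sub, mul_add, mul_one]; abel
    rw [e, hB'1]
  have hB'eq : B' = (1 - P) - B := by rw [← hsum]; abel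
  have hadjsmul : ContinuousLinearMap.adjoint (Complex.I • ((U - 1) * B))
      = (starRingEnd ℂ Complex.I) • ContinuousLinearMap.adjoint ((U - 1) * B) :=
    LinearIsometryEquiv.map_smulₛₗ ContinuousLinearMap.adjoint Complex.I ((U - 1) * B)
  rw [← ContinuousLinearMap.mul_def]
  rw [hadjsmul, Complex.conj_I, adjoint_mul, map_sub, adjoint_one, ← hV, ← hB', h3, h2, hB'eq]
  have e : ((1 : H →L[ℂ] H) - P) - ((1 - P) - B) - ((1 - P) - B)
      = -((1 - P) - B - B) := by abel
  rw [e, smul_neg, neg_smul, neg_neg]
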